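/- Let 0 < r < R and N ≥ 3, and let u be the radial solution of -Δu = 1 on the annulus A = B_R \ closure(B_r) with u = 0 on ∂A. Then |u'(r)| ≠ |u'(R)|, i.e. the normal derivative of u cannot attain the same absolute value on the inner sphere |x| = r and the outer sphere |x| = R. In particular, no annulus solves Serrin's overdetermined problem. -/

import Mathlib

lemma bern_aux (r R : ℝ) (hr : 0 < r) (hrR : r ≤ R) :
    ∀ n : ℕ, r ^ (n+1) + (n+1) * (R - r) * r ^ n ≤ R ^ (n+1) := by
  intro n
  induction n with
  | zero => norm_num
  | succ n ih =>
      have hR : (0:ℝ) < R := lt_of_lt_of_le hr hrR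
      have h2 : R * (r ^ (n+1) + ((n:ℝ)+1) * (R - r) * r ^ n) ≤ R * R ^ (n+1) := by
        push_cast at ih; exact mul_le_mul_of_nonneg_left ih hR.le
      have h4 : (0:ℝ) ≤ ((n:ℝ)+1) * ((R - r) * (R * r ^ n - r * r ^ n)) := by
        apply mul_nonneg (by positivity)
        apply mul_nonneg (sub_nonneg.mpr hrR)
        have : r * r ^ n ≤ R * r ^ n := mul_le_mul_of_nonneg_right hrR (pow_pos hr n).le
        linarith
      push_cast [pow_succ] at h2 ⊢
      ring_nf at h2 h4 ⊢
      linarith [h2, h4]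

lemma key_ineq (m : ℕ) (hm : 1 ≤ m) (r R : ℝ) (hr : 0 < r) (hrR : r < R) :
    2 * r * R * (R ^ m - r ^ m) < m * (R - r) * (R ^ (m+1) + r ^ (m+1)) := by
  induction m with
  | zero => omega
  | succ m ih =>
      rcases Nat.eq_or_lt_of_le hm with h1 | h1
      · have : m = 0 := by omega
        subst this
        have h := sub_pos.mpr hrR
        push_cast
        nlinarith [mul_pos h (mul_pos h h)]
      · have hm1 : 1 ≤ m := by omega
        have IH := ih hm1
        have hR : (0:ℝ) < R := hr.trans hrR
        have hIH' := mul_lt_mul_of_pos_left IH hR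
        have hb' := mul_le_mul_of_nonneg_left (bern_aux r R hr hrR.le (m+1)) (sub_nonneg.mpr hrR.le)
        push_cast [pow_succ] at hIH' hb' ⊢
        ring_nf at hIH' hb' ⊢
        linarith [hIH', hb']


/-- For the radial torsion function `f(s) = a + b s^{2-N} - s²/(2N)` on an annulus
(`N ≥ 3`, `0 < r < R`, `f(r) = f(R) = 0`), the absolute values of the normal
derivative on the two boundary spheres differ: `|f'(r)| ≠ |f'(R)|`.
In particular no annulus solves Serrin's overdetermined problem. -/
theorem annulus_gradient_mismatch (N : ℕ) (hN : 3 ≤ N)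
    (r R a b : ℝ) (hr : 0 < r) (hrR : r < R)
    (f : ℝ → ℝ)
    (hf : ∀ s : ℝ, f s = a + b * s ^ ((2 : ℝ) - N) - s ^ 2 / (2 * N))
    (hfr : f r = 0) (hfR : f R = 0) :
    |deriv f r| ≠ |deriv f R| := by
  have hfe : f = fun s => a + b * s ^ ((2:ℝ) - N) - s ^ 2 / (2 * N) := funext hf
  subst hfe
  obtain ⟨m, rfl⟩ : ∃ m, N = m + 2 := ⟨N - 2, by omega⟩
  have hm1 : 1 ≤ m := by omega
  have hNcast : ((m + 2 : ℕ) : ℝ) = (m : ℝ) + 2 := by push_cast; ring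
  have hNpos : (0:ℝ) < (m:ℝ) + 2 := by positivity
  have hderiv : ∀ s : ℝ, 0 < s →
      deriv (fun s => a + b * s ^ ((2:ℝ) - (m+2:ℕ)) - s ^ 2 / (2 * (m+2:ℕ))) s
        = b * (((2:ℝ) - (m+2:ℕ)) * s ^ ((2:ℝ) - (m+2:ℕ) - 1)) - s / ((m+2:ℕ):ℝ) := by
    intro s hs
    have h1 : HasDerivAt (fun x : ℝ => x ^ ((2:ℝ) - (m+2:ℕ)))
        (((2:ℝ) - (m+2:ℕ)) * s ^ ((2:ℝ) - (m+2:ℕ) - 1)) s :=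
      Real.hasDerivAt_rpow_const (Or.inl hs.ne')
    have h2 := ((h1.const_mul b).const_add a).sub ((hasDerivAt_pow 2 s).div_const (2 * ((m+2:ℕ):ℝ)))
    have h3 : deriv (fun s => a + b * s ^ ((2:ℝ) - (m+2:ℕ)) - s ^ 2 / (2 * (m+2:ℕ))) s = _ := h2.deriv
    rw [h3]
    congr 1
    have hc : ((m+2:ℕ):ℝ) ≠ 0 := by positivity
    field_simp
    ring
  have hc : ∀ s : ℝ, 0 < s → s ^ ((2:ℝ) - ((m+2:ℕ):ℝ)) = (s ^ m)⁻¹ := by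
    intro s hs
    rw [show (2:ℝ) - ((m+2:ℕ):ℝ) = -((m:ℕ):ℝ) by push_cast; ring,
      Real.rpow_neg hs.le, Real.rpow_natCast]
  have hc1 : ∀ s : ℝ, 0 < s → s ^ ((2:ℝ) - ((m+2:ℕ):ℝ) - 1) = (s ^ (m+1))⁻¹ := by
    intro s hs
    rw [show (2:ℝ) - ((m+2:ℕ):ℝ) - 1 = -(((m+1:ℕ)):ℝ) by push_cast; ring,
      Real.rpow_neg hs.le, Real.rpow_natCast]
  have hR0 : (0:ℝ) < R := hr.trans hrR
  simp only at hfr hfR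
  rw [hc r hr, hNcast] at hfr
  rw [hc R hR0, hNcast] at hfR
  have h0 : b * (r^m)⁻¹ - b * (R^m)⁻¹ = r^2/(2*((m:ℝ)+2)) - R^2/(2*((m:ℝ)+2)) := by
    ring_nf at hfr hfR ⊢
    linarith [hfr, hfR]
  have hrm : (0:ℝ) < r ^ m := pow_pos hr m
  have hRm : (0:ℝ) < R ^ m := pow_pos hR0 m
  have hrm1 : (0:ℝ) < r ^ (m+1) := pow_pos hr (m+1)
  have hRm1 : (0:ℝ) < R ^ (m+1) := pow_pos hR0 (m+1)
  field_simp at h0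
  have hbneg : b < 0 := by
    have hlt : r ^ m < R ^ m := pow_lt_pow_left₀ hrR hr.le (by omega)
    by_contra hb
    push_neg at hb
    have h1 : 0 ≤ b * (R ^ m - r ^ m) * (2 * ((m:ℝ)+2)) :=
      mul_nonneg (mul_nonneg hb (sub_nonneg.mpr hlt.le)) (by positivity)
    have h2 : (r ^ 2 - R ^ 2) * (r ^ m * R ^ m) < 0 :=
      mul_neg_of_neg_of_pos (by nlinarith) (mul_pos hrm hRm)
    nlinarith [h0, h1, h2]
  intro hab
  rw [hderiv r hr, hderiv R hR0, hc1 r hr, hc1 R hR0, hNcast] at hab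
  rcases abs_eq_abs.mp hab with h | h
  · field_simp at h
    have hlt1 : r ^ (m+1) < R ^ (m+1) := pow_lt_pow_left₀ hrR hr.le (by omega)
    have hm0 : (0:ℝ) < (m:ℝ) := by exact_mod_cast hm1
    have t2 : (0:ℝ) < ((m:ℝ) * (((m:ℝ)+2) * ((m:ℝ)+2))) * ((-b) * (R ^ (m+1) - r ^ (m+1))) := by
      apply mul_pos (by positivity)
      exact mul_pos (neg_pos.mpr hbneg) (sub_pos.mpr hlt1)
    have t3 : (0:ℝ) < ((m:ℝ)+2) * ((r ^ (m+1) * R ^ (m+1)) * (R - r)) := by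
      exact mul_pos hNpos (mul_pos (mul_pos hrm1 hRm1) (sub_pos.mpr hrR))
    nlinarith [h, t2, t3]
  · have hkey : 2 * r * R * (R ^ m - r ^ m) < (m:ℝ) * (R - r) * (R ^ (m+1) + r ^ (m+1)) :=
      key_ineq m hm1 r R hr hrR
    field_simp at h
    have hF : (0:ℝ) < r ^ m * R ^ m * (R + r) * ((m:ℝ)+2) := by positivity
    have heq : 2 * r * R * (R ^ m - r ^ m) * (r ^ m * R ^ m * (R + r) * ((m:ℝ)+2))
        = (m:ℝ) * (R - r) * (R ^ (m+1) + r ^ (m+1)) * (r ^ m * R ^ m * (R + r) * ((m:ℝ)+2)) := by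
      linear_combination (-2*((m:ℝ)+2)*(R ^ m - r ^ m)) * h + (-(m:ℝ)*((m:ℝ)+2)*(R ^ (m+1) + r ^ (m+1))) * h0
    have hcancel := mul_right_cancel₀ (ne_of_gt hF) heq
    linarith [hkey, hcancel]
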